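/- Let ω(n) denote the number of distinct prime divisors of n. There exists an absolute constant C such that for all integers n ≥ 2, ω(n) ≤ C · log n / (2 + log log n). -/

import Mathlib

open Finset

/-- There is an absolute constant `C` with `ω(n) ≤ C log n / (2 + log log n)` for `n ≥ 2`. -/
theorem omega_bound :
    ∃ C : ℝ, 0 < C ∧ ∀ n : ℕ, 2 ≤ n →
      (n.primeFactors.card : ℝ) ≤ C * Real.log n / (2 + Real.log (Real.log n)) := by
  refine ⟨12, by norm_num, fun n hn => ?_⟩
  have hnpos : 0 < n := by omega
  set L := Real.log n with hLdef
  have hL2 : Real.log 2 ≤ L := Real.log_le_log (by norm_num) (by exact_mod_cast hn)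
  have hlog2 : (0.6931471803 : ℝ) < Real.log 2 := Real.log_two_gt_d9
  have hLhalf : (1/2 : ℝ) ≤ L := by linarith
  have hLpos : (0:ℝ) < L := by linarith
  have hsqpos : 0 < Real.sqrt L := Real.sqrt_pos.mpr hLpos
  have hsqsq : Real.sqrt L ^ 2 = L := Real.sq_sqrt hLpos.le
  set D := 2 + Real.log L with hDdef
  have hDpos : (1:ℝ) ≤ D := by
    have h1 : Real.log (1/2) ≤ Real.log L := Real.log_le_log (by norm_num) hLhalf
    have h2 : Real.log (1/2 : ℝ) = - Real.log 2 := by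
      rw [one_div, Real.log_inv]
    have hlog2' : Real.log 2 < 0.6931471808 := Real.log_two_lt_d9
    rw [hDdef]; linarith
  have hDpos0 : (0:ℝ) < D := by linarith
  -- D ≤ 2 √L
  have hDle : D ≤ 2 * Real.sqrt L := by
    have h1 : Real.log (Real.sqrt L) ≤ Real.sqrt L - 1 :=
      Real.log_le_sub_one_of_pos hsqpos
    have h2 : Real.log (Real.sqrt L) = Real.log L / 2 := Real.log_sqrt hLpos.le
    rw [hDdef]; linarith
  have hsqle : Real.sqrt L ≤ 2 * L / D := by
    rw [le_div_iff₀ hDpos0]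
    nlinarith
  set B := ⌈Real.exp (D/2)⌉₊ with hBdef
  have hexpeq : Real.exp (D/2) = Real.exp 1 * Real.sqrt L := by
    have h2 : Real.log (Real.sqrt L) = Real.log L / 2 := Real.log_sqrt hLpos.le
    rw [show D/2 = 1 + Real.log (Real.sqrt L) by rw [h2, hDdef]; ring,
      Real.exp_add, Real.exp_log hsqpos]
  have hBle : (B : ℝ) ≤ Real.exp 1 * Real.sqrt L + 1 := by
    have h := Nat.ceil_lt_add_one (R := ℝ) (Real.exp_pos (D/2)).le
    rw [← hBdef] at h
    linarith [hexpeq]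
  have hlogB : D/2 ≤ Real.log B := by
    have h1 : Real.exp (D/2) ≤ (B:ℝ) := Nat.le_ceil _
    calc D/2 = Real.log (Real.exp (D/2)) := (Real.log_exp _).symm
      _ ≤ Real.log B := Real.log_le_log (Real.exp_pos _) h1
  -- split
  set S1 := n.primeFactors.filter (· < B) with hS1
  set S2 := n.primeFactors.filter (fun p => ¬ p < B) with hS2
  have hcard : S1.card + S2.card = n.primeFactors.card :=
    Finset.card_filter_add_card_filter_not _
  -- small primes
  have hS1card : (S1.card : ℝ) ≤ B := by
    have hsub : S1 ⊆ Finset.range B := by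
      intro p hp
      rw [hS1, Finset.mem_filter] at hp
      exact Finset.mem_range.mpr hp.2
    have := Finset.card_le_card hsub
    rw [Finset.card_range] at this
    exact_mod_cast this
  have h1le : (1:ℝ) ≤ 2 * Real.sqrt L := by nlinarith
  have hexp1 : Real.exp 1 < 2.7182818286 := Real.exp_one_lt_d9
  have hS1final : (S1.card : ℝ) ≤ 10 * L / D := by
    have : (S1.card : ℝ) ≤ 5 * Real.sqrt L := by
      have : Real.exp 1 * Real.sqrt L + 1 ≤ 5 * Real.sqrt L := by nlinarith
      linarith
    calc (S1.card : ℝ) ≤ 5 * Real.sqrt L := this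
      _ ≤ 5 * (2 * L / D) := by linarith
      _ = 10 * L / D := by ring
  -- big primes
  have hS2prod : B ^ S2.card ≤ n := by
    have h1 : B ^ S2.card ≤ ∏ p ∈ S2, p := by
      apply Finset.pow_card_le_prod
      intro p hp
      rw [hS2, Finset.mem_filter] at hp
      omega
    have h2 : (∏ p ∈ S2, p) ∣ n := by
      refine dvd_trans ?_ (Nat.prod_primeFactors_dvd n)
      exact Finset.prod_dvd_prod_of_subset _ _ _ (Finset.filter_subset _ _)
    exact h1.trans (Nat.le_of_dvd hnpos h2)
  have hBpos : 0 < B := Nat.ceil_pos.mpr (Real.exp_pos _)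
  have hS2final : (S2.card : ℝ) ≤ 2 * L / D := by
    have h1 : (S2.card : ℝ) * Real.log B ≤ L := by
      have := Real.log_le_log (by positivity) (show ((B ^ S2.card : ℕ) : ℝ) ≤ n by exact_mod_cast hS2prod)
      rwa [Nat.cast_pow, Real.log_pow] at this
    have h2 : (S2.card : ℝ) * (D/2) ≤ L := by
      calc (S2.card : ℝ) * (D/2) ≤ (S2.card : ℝ) * Real.log B := by
            apply mul_le_mul_of_nonneg_left hlogB (Nat.cast_nonneg _)
        _ ≤ L := h1
    rw [le_div_iff₀ hDpos0]
    nlinarith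
  -- combine
  have : (n.primeFactors.card : ℝ) = (S1.card : ℝ) + S2.card := by
    rw [← hcard]; push_cast; ring
  rw [this]
  calc (S1.card : ℝ) + S2.card ≤ 10 * L / D + 2 * L / D := by linarith
    _ = 12 * L / D := by ring
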